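/- Let E = Σ_{t=1}^T (1/2)(|t⟩−|t-1⟩)(⟨t|−⟨t-1|) acting on the clock space C with orthonormal basis |0⟩,…,|T⟩. Then the smallest nonzero eigenvalue of E is 1 − cos(π/(T+1)). -/

import Mathlib

open Matrix Finset Real

lemma sum_ind (T t : ℕ) (ht : t ≤ T) (f : Fin (T+1) → ℂ) :
    ∑ j : Fin (T+1), (if (j:ℕ) = t then (1:ℂ) else 0) * f j = f ⟨t, by omega⟩ := by
  have h : ∀ j : Fin (T+1), ((j:ℕ) = t) = (j = ⟨t, by omega⟩) := fun j => by
    simp [Fin.ext_iff]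
  simp_rw [h, ite_mul, one_mul, zero_mul]
  simp

lemma mulVec_apply (T : ℕ) (b : ℕ → Fin (T + 1) → ℂ)
    (hb : ∀ k ≤ T, b k = fun i : Fin (T + 1) => if (i : ℕ) = k then (1 : ℂ) else 0)
    (E : Matrix (Fin (T + 1)) (Fin (T + 1)) ℂ)
    (hE : E = ∑ t ∈ Finset.Icc 1 T,
        (1/2 : ℂ) • vecMulVec (b t - b (t-1)) (star (b t - b (t-1))))
    (U : ℕ → ℂ) (i : Fin (T+1)) :
    (E *ᵥ (fun j : Fin (T+1) => U j)) i
      = (if 1 ≤ (i:ℕ) then (1/2 : ℂ) * (U i - U ((i:ℕ)-1)) else 0)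
        - (if (i:ℕ) < T then (1/2 : ℂ) * (U ((i:ℕ)+1) - U (i:ℕ)) else 0) := by
  subst hE
  have sumVec : ∀ (s : Finset ℕ) (A : ℕ → Matrix (Fin (T+1)) (Fin (T+1)) ℂ)
      (u : Fin (T+1) → ℂ), (∑ t ∈ s, A t) *ᵥ u = ∑ t ∈ s, A t *ᵥ u := by
    intro s A u
    ext j
    simp only [mulVec, dotProduct, Matrix.sum_apply, Finset.sum_apply, Finset.sum_mul]
    exact Finset.sum_comm
  rw [sumVec, Finset.sum_apply]
  have step : ∀ t ∈ Finset.Icc 1 T,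
      (((1/2 : ℂ) • vecMulVec (b t - b (t-1)) (star (b t - b (t-1)))) *ᵥ
        (fun j : Fin (T+1) => U j)) i
      = ((if (i:ℕ) = t then (1:ℂ) else 0) - (if (i:ℕ) = t-1 then (1:ℂ) else 0))
          * ((1/2 : ℂ) * (U t - U (t-1))) := by
    intro t htm
    rw [Finset.mem_Icc] at htm
    have hvm : ∀ (w v u : Fin (T+1) → ℂ),
        (vecMulVec w v *ᵥ u) i = w i * ∑ j, v j * u j := by
      intro w v u
      simp [mulVec, dotProduct, vecMulVec_apply, Finset.mul_sum, mul_assoc]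
    rw [smul_mulVec, Pi.smul_apply, hvm, smul_eq_mul]
    rw [hb t htm.2, hb (t-1) (le_trans (Nat.sub_le _ _) htm.2)]
    simp only [Pi.sub_apply, star_sub, Pi.star_apply, apply_ite (star : ℂ → ℂ),
      star_one, star_zero]
    simp_rw [sub_mul]
    rw [Finset.sum_sub_distrib, sum_ind T t htm.2,
      sum_ind T (t-1) (le_trans (Nat.sub_le _ _) htm.2)]
    ring
  rw [Finset.sum_congr rfl step]
  simp_rw [sub_mul, Finset.sum_sub_distrib, ite_mul, one_mul, zero_mul]
  congr 1
  · rw [Finset.sum_ite_eq]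
    simp only [Finset.mem_Icc]
    have hi := Nat.lt_succ_iff.mp i.isLt
    congr 1
    simp only [eq_iff_iff]
    omega
  · have h2 : ∀ t ∈ Finset.Icc 1 T,
        (if (i:ℕ) = t - 1 then (1/2 : ℂ) * (U t - U (t-1)) else 0)
        = (if (i:ℕ)+1 = t then (1/2 : ℂ) * (U t - U (t-1)) else 0) := by
      intro t htm
      rw [Finset.mem_Icc] at htm
      congr 1
      simp only [eq_iff_iff]
      omega
    rw [Finset.sum_congr rfl h2, Finset.sum_ite_eq]
    simp only [Finset.mem_Icc]
    congr 1
    simp only [eq_iff_iff]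
    omega

noncomputable def ur (T k n : ℕ) : ℝ := Real.cos (π * k / (T+1) * (n + 1/2))

lemma keylem (T k n : ℕ) (hT : 1 ≤ T) (hn : n ≤ T) :
    (if 1 ≤ n then (1/2:ℝ) * (ur T k n - ur T k (n-1)) else 0)
      - (if n < T then (1/2:ℝ) * (ur T k (n+1) - ur T k n) else 0)
    = (1 - Real.cos (π * k / (T+1))) * ur T k n := by
  have hT0 : ((T:ℝ)+1) ≠ 0 := by positivity
  set a := π * (k:ℝ) / (T+1) with ha
  have hca : Real.cos a = 2 * Real.cos (a/2) ^ 2 - 1 := by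
    have h := Real.cos_two_mul (a/2)
    rwa [show 2*(a/2) = a by ring] at h
  by_cases h1 : 1 ≤ n <;> by_cases h2 : n < T <;>
    simp only [h1, h2, if_true, if_false]
  · -- interior
    have hc : ((n-1:ℕ):ℝ) = (n:ℝ) - 1 := by push_cast [h1]; ring
    unfold ur
    rw [hc]
    push_cast
    rw [show a * (((n:ℝ)-1) + 1/2) = a * ((n:ℝ)+1/2) - a by ring,
      show a * (((n:ℝ)+1) + 1/2) = a * ((n:ℝ)+1/2) + a by ring,
      Real.cos_sub, Real.cos_add]
    ring
  · -- n = T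
    have hnT : n = T := by omega
    subst hnT
    have hc : ((n-1:ℕ):ℝ) = (n:ℝ) - 1 := by push_cast [h1]; ring
    unfold ur
    rw [hc]
    rw [show a * ((n:ℝ) + 1/2) = (k:ℝ)*π - a/2 by rw [ha]; field_simp; ring,
      show a * (((n:ℝ)-1) + 1/2) = (k:ℝ)*π - 3*(a/2) by rw [ha]; field_simp; ring,
      Real.cos_nat_mul_pi_sub, Real.cos_nat_mul_pi_sub, Real.cos_three_mul, hca]
    ring
  · -- n = 0
    have hn0 : n = 0 := by omega
    subst hn0
    unfold ur
    push_cast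
    rw [show a * ((0:ℝ) + 1/2) = a/2 by ring,
      show π * (k:ℝ) / (T+1) * ((1:ℝ) + 1/2) = 3*(a/2) by rw [ha]; ring,
      Real.cos_three_mul, hca]
    ring
  · omega


lemma cos_sum_zero (T m : ℕ) (hm1 : 1 ≤ m) (hm2 : m < 2*(T+1)) :
    ∑ i ∈ Finset.range (T+1), Real.cos (π * m / (T+1) * (i + 1/2)) = 0 := by
  have hT0 : (0:ℝ) < (T:ℝ)+1 := by positivity
  obtain ⟨c, hc⟩ : ∃ c:ℝ, c = π * m / (T+1) := ⟨_, rfl⟩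
  have hm1' : (1:ℝ) ≤ (m:ℝ) := by exact_mod_cast hm1
  have hm2' : (m:ℝ) < 2*((T:ℝ)+1) := by exact_mod_cast hm2
  have hc0 : 0 < c := by rw [hc]; apply div_pos _ hT0; nlinarith [Real.pi_pos]
  have hc2 : c < 2*π := by rw [hc, div_lt_iff₀ hT0]; nlinarith [Real.pi_pos]
  obtain ⟨d, hd⟩ : ∃ d:ℝ, d = c/2 := ⟨_, rfl⟩
  have hd0 : 0 < d := by rw [hd]; positivity
  have hdpi : d < π := by rw [hd]; linarith
  have hsind : Real.sin d ≠ 0 := ne_of_gt (Real.sin_pos_of_pos_of_lt_pi hd0 hdpi)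
  obtain ⟨w, hw⟩ : ∃ w:ℂ, w = Complex.exp (d * Complex.I) := ⟨_, rfl⟩
  have hwne : w ≠ 0 := by rw [hw]; exact Complex.exp_ne_zero _
  have hw2 : w^2 = Complex.exp (c * Complex.I) := by
    rw [hw, ← Complex.exp_nat_mul]
    congr 1
    rw [show c = 2*d by rw [hd]; ring]
    push_cast
    ring
  have hxne : Complex.exp ((c:ℝ) * Complex.I) ≠ 1 := by
    intro h
    rw [Complex.exp_eq_one_iff] at h
    obtain ⟨z, hz⟩ := h
    have hz2 : (c:ℂ) * Complex.I = ((z:ℂ) * (2*π)) * Complex.I := by rw [hz]; ring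
    have hz' := mul_right_cancel₀ Complex.I_ne_zero hz2
    have hzr : c = (z:ℝ) * (2*π) := by exact_mod_cast hz'
    have h1 : (0:ℝ) < (z:ℝ) := by nlinarith [Real.pi_pos]
    have h2 : (z:ℝ) < 1 := by nlinarith [Real.pi_pos]
    have h1' : 0 < z := by exact_mod_cast h1
    have h2' : z < 1 := by exact_mod_cast h2
    omega
  obtain ⟨S, hS⟩ : ∃ S:ℂ, S = ∑ i ∈ Finset.range (T+1),
      Complex.exp ((c*(i+1/2) : ℝ) * Complex.I) := ⟨_, rfl⟩
  have hterm : ∀ i ∈ Finset.range (T+1),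
      Complex.exp ((c*(i+1/2) : ℝ) * Complex.I)
        = Complex.exp ((c:ℝ) * Complex.I)^i * w := by
    intro i _
    rw [hw, ← Complex.exp_nat_mul, ← Complex.exp_add]
    congr 1
    rw [hd]
    push_cast
    ring
  have hgeo : S * (Complex.exp ((c:ℝ) * Complex.I) - 1)
      = (Complex.exp ((c:ℝ) * Complex.I)^(T+1) - 1) * w :=
    calc S * (Complex.exp ((c:ℝ) * Complex.I) - 1)
        = ((∑ i ∈ Finset.range (T+1), Complex.exp ((c:ℝ) * Complex.I)^i) * w) *
            (Complex.exp ((c:ℝ) * Complex.I) - 1) := by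
          rw [hS, Finset.sum_congr rfl hterm, ← Finset.sum_mul]
      _ = ((∑ i ∈ Finset.range (T+1), Complex.exp ((c:ℝ) * Complex.I)^i) *
            (Complex.exp ((c:ℝ) * Complex.I) - 1)) * w := by ring
      _ = (Complex.exp ((c:ℝ) * Complex.I)^(T+1) - 1) * w := by rw [geom_sum_mul]
  have hcT : c * ((T:ℝ)+1) = π * m := by rw [hc]; field_simp
  have hpow : Complex.exp ((c:ℝ) * Complex.I)^(T+1) = ((-1:ℂ))^m := by
    rw [← Complex.exp_nat_mul]
    have hcc : ((c:ℝ):ℂ) * (((T:ℝ):ℂ)+1) = (π:ℂ) * (m:ℂ) := by exact_mod_cast congrArg Complex.ofReal hcT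
    rw [show ((T+1 : ℕ) : ℂ) * ((c:ℝ) * Complex.I) = ((m:ℕ):ℂ) * ((π:ℝ) * Complex.I) by push_cast; push_cast at hcc; linear_combination Complex.I * hcc]
    rw [Complex.exp_nat_mul, Complex.exp_pi_mul_I]
  have hww : w * ((2:ℂ) * (Real.sin d : ℂ) * Complex.I) = w^2 - 1 := by
    rw [hw, Complex.exp_mul_I, Complex.ofReal_sin]
    linear_combination Complex.sin (d:ℂ)^2 * Complex.I_sq - Complex.sin_sq_add_cos_sq (d:ℂ)
  have hmain : S * ((2:ℂ) * (Real.sin d:ℂ) * Complex.I) = ((-1:ℝ)^m - 1 : ℝ) := by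
    apply mul_right_cancel₀ hwne
    calc S * ((2:ℂ) * (Real.sin d:ℂ) * Complex.I) * w
        = S * (w * ((2:ℂ) * (Real.sin d:ℂ) * Complex.I)) := by ring
      _ = S * (w^2 - 1) := by rw [hww]
      _ = S * (Complex.exp ((c:ℝ) * Complex.I) - 1) := by rw [hw2]
      _ = (Complex.exp ((c:ℝ) * Complex.I)^(T+1) - 1) * w := hgeo
      _ = (((-1:ℝ)^m - 1 : ℝ) : ℂ) * w := by rw [hpow]; norm_cast
  have haux : ∀ (z:ℂ) (r:ℝ), (z * ((r:ℝ) * Complex.I)).im = r * z.re := by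
    intro z r
    simp [Complex.mul_im]
    ring
  have him : (2 * Real.sin d) * S.re = 0 := by
    have h := congrArg Complex.im hmain
    rw [show (2:ℂ) * (Real.sin d:ℂ) * Complex.I = ((2*Real.sin d : ℝ):ℂ) * Complex.I by
      push_cast; ring] at h
    rw [haux, Complex.ofReal_im] at h
    exact h
  have hre : S.re = 0 := by
    rcases mul_eq_zero.mp him with h | h
    · exact absurd h (by nlinarith [Real.sin_pos_of_pos_of_lt_pi hd0 hdpi])
    · exact h
  have hfin : S.re = ∑ i ∈ Finset.range (T+1), Real.cos (c * (i + 1/2)) := by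
    rw [hS, Complex.re_sum]
    exact Finset.sum_congr rfl fun i _ => Complex.exp_ofReal_mul_I_re _
  rw [← hc]
  rw [hfin] at hre
  exact hre

lemma prod_to_sum (A B : ℝ) :
    Real.cos A * Real.cos B = (Real.cos (A+B) + Real.cos (A-B))/2 := by
  rw [Real.cos_add, Real.cos_sub]; ring

lemma ortho' (T k l : ℕ) (hk : k ≤ T) (hlk : l < k) :
    ∑ i ∈ Finset.range (T+1), ur T k i * ur T l i = 0 := by
  have hT0 : ((T:ℝ)+1) ≠ 0 := by positivity
  have key : ∀ n:ℕ, ur T k n * ur T l n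
      = (1/2)*(Real.cos (π * ((k+l:ℕ)) / (T+1) * (n+1/2))
          + Real.cos (π * ((k-l:ℕ)) / (T+1) * (n+1/2))) := by
    intro n
    unfold ur
    rw [prod_to_sum]
    have h1 : π * (k:ℝ)/(T+1)*(n+1/2) + π * (l:ℝ)/(T+1)*(n+1/2)
        = π * ((k+l:ℕ):ℝ)/(T+1)*(n+1/2) := by push_cast; field_simp
    have h2 : π * (k:ℝ)/(T+1)*(n+1/2) - π * (l:ℝ)/(T+1)*(n+1/2)
        = π * ((k-l:ℕ):ℝ)/(T+1)*(n+1/2) := by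
      push_cast [Nat.cast_sub hlk.le]
      field_simp
    rw [h1, h2]
    ring
  rw [Finset.sum_congr rfl fun n _ => key n, ← Finset.mul_sum, Finset.sum_add_distrib,
    cos_sum_zero T (k+l) (by omega) (by omega),
    cos_sum_zero T (k-l) (by omega) (by omega)]
  ring
lemma ortho (T k l : ℕ) (hk : k ≤ T) (hl : l ≤ T) (hkl : k ≠ l) :
    ∑ i ∈ Finset.range (T+1), ur T k i * ur T l i = 0 := by
  rcases Nat.lt_or_ge l k with h | h
  · exact ortho' T k l hk h
  · have h' : k < l := by omega
    rw [Finset.sum_congr rfl fun n _ => mul_comm _ _]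
    exact ortho' T l k hl h'

noncomputable def Uc (T k n : ℕ) : ℂ := (ur T k n : ℂ)

lemma eig (T : ℕ) (hT : 1 ≤ T) (b : ℕ → Fin (T + 1) → ℂ)
    (hb : ∀ k ≤ T, b k = fun i : Fin (T + 1) => if (i : ℕ) = k then (1 : ℂ) else 0)
    (E : Matrix (Fin (T + 1)) (Fin (T + 1)) ℂ)
    (hE : E = ∑ t ∈ Finset.Icc 1 T,
        (1/2 : ℂ) • vecMulVec (b t - b (t-1)) (star (b t - b (t-1)))) (k : ℕ) :
    E *ᵥ (fun j : Fin (T+1) => Uc T k (j:ℕ))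
      = ((1 - Real.cos (π * k / (T+1)) : ℝ) : ℂ) • fun j : Fin (T+1) => Uc T k (j:ℕ) := by
  ext i
  rw [mulVec_apply T b hb E hE (fun n => Uc T k n) i]
  have hi := Nat.lt_succ_iff.mp i.isLt
  have key := keylem T k (i:ℕ) hT hi
  simp only [Pi.smul_apply, smul_eq_mul, Uc]
  rw [show ((1 - Real.cos (π * k / (T+1)) : ℝ) : ℂ) * ((ur T k (i:ℕ) : ℝ) : ℂ)
      = (((1 - Real.cos (π * k / (T+1))) * ur T k (i:ℕ) : ℝ) : ℂ) by push_cast; ring, ← key]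
  split_ifs <;> push_cast <;> ring

lemma norm_pos (T k : ℕ) (hk : k ≤ T) :
    0 < ∑ i ∈ Finset.range (T+1), ur T k i * ur T k i := by
  have hT0 : (0:ℝ) < (T:ℝ)+1 := by positivity
  apply Finset.sum_pos' (fun i _ => mul_self_nonneg _)
  refine ⟨0, Finset.mem_range.mpr (by omega), ?_⟩
  have h0 : 0 < ur T k 0 := by
    unfold ur
    apply Real.cos_pos_of_mem_Ioo
    constructor
    · have : (0:ℝ) ≤ π * k / (T+1) * ((0:ℕ) + 1/2) := by positivity
      have := Real.pi_pos
      linarith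
    · have hkT : (k:ℝ) < (T:ℝ)+1 := by exact_mod_cast Nat.lt_succ_of_le hk
      have hne : ((T:ℝ)+1) ≠ 0 := ne_of_gt hT0
      have heq : π * (k:ℝ) / ((T:ℝ)+1) * (((0:ℕ):ℝ) + 1/2) = π * ((k:ℝ) / (((T:ℝ)+1) * 2)) := by
        push_cast
        field_simp
        ring
      rw [heq]
      have h2 : (k:ℝ) / (((T:ℝ)+1)*2) < 1/2 := by
        rw [div_lt_iff₀ (by positivity)]
        nlinarith
      nlinarith [Real.pi_pos]
  exact mul_pos h0 h0

lemma dotProduct_sum' {N : ℕ} {ι : Type*} (u : Fin N → ℂ) (s : Finset ι) (f : ι → Fin N → ℂ) :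
    u ⬝ᵥ (∑ i ∈ s, f i) = ∑ i ∈ s, u ⬝ᵥ f i := by
  simp only [dotProduct, Finset.sum_apply, Finset.mul_sum]
  exact Finset.sum_comm

/-- The smallest nonzero eigenvalue of the (half) path-graph Laplacian
`E = Σ_{t=1}^T (1/2)(|t⟩−|t-1⟩)(⟨t|−⟨t-1|)` on `ℂ^{T+1}` is `1 − cos(π/(T+1))`:
it is an eigenvalue, and every nonzero eigenvalue is at least this value. -/
theorem stmt6 (T : ℕ) (hT : 1 ≤ T)
    (b : ℕ → Fin (T + 1) → ℂ)
    (hb : ∀ k ≤ T, b k = fun i : Fin (T + 1) => if (i : ℕ) = k then (1 : ℂ) else 0)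
    (E : Matrix (Fin (T + 1)) (Fin (T + 1)) ℂ)
    (hE : E = ∑ t ∈ Finset.Icc 1 T,
        (1/2 : ℂ) • vecMulVec (b t - b (t-1)) (star (b t - b (t-1)))) :
    (∃ v : Fin (T + 1) → ℂ, v ≠ 0 ∧
        E *ᵥ v = ((1 - Real.cos (π / (T + 1)) : ℝ) : ℂ) • v) ∧
    (∀ (μ : ℝ) (v : Fin (T + 1) → ℂ), v ≠ 0 → E *ᵥ v = (μ : ℂ) • v →
        μ = 0 ∨ 1 - Real.cos (π / (T + 1)) ≤ μ) := by
  have hT0 : (0:ℝ) < (T:ℝ)+1 := by positivity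
  set vv : Fin (T+1) → (Fin (T+1) → ℂ) := fun k j => Uc T (k:ℕ) (j:ℕ) with hvv
  have heigv : ∀ k : Fin (T+1),
      E *ᵥ vv k = ((1 - Real.cos (π * (k:ℕ) / (T+1)) : ℝ) : ℂ) • vv k :=
    fun k => eig T hT b hb E hE (k:ℕ)
  have hdot : ∀ k l : Fin (T+1),
      star (vv k) ⬝ᵥ vv l
        = ((∑ i ∈ Finset.range (T+1), ur T (k:ℕ) i * ur T (l:ℕ) i : ℝ) : ℂ) := by
    intro k l
    rw [show ((∑ i ∈ Finset.range (T+1), ur T (k:ℕ) i * ur T (l:ℕ) i : ℝ) : ℂ)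
        = ∑ i ∈ Finset.range (T+1), ((ur T (k:ℕ) i : ℂ) * (ur T (l:ℕ) i : ℂ)) by push_cast; rfl]
    rw [← Fin.sum_univ_eq_sum_range (fun i => (ur T (k:ℕ) i : ℂ) * (ur T (l:ℕ) i : ℂ)) (T+1)]
    simp only [hvv, dotProduct, Pi.star_apply, Uc, Complex.star_def, Complex.conj_ofReal]
  have hkT : ∀ k : Fin (T+1), (k:ℕ) ≤ T := fun k => Nat.lt_succ_iff.mp k.isLt
  have hdot_ne : ∀ k : Fin (T+1), star (vv k) ⬝ᵥ vv k ≠ 0 := by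
    intro k
    rw [hdot]
    exact_mod_cast ne_of_gt (norm_pos T (k:ℕ) (hkT k))
  have hdot_zero : ∀ k l : Fin (T+1), k ≠ l → star (vv k) ⬝ᵥ vv l = 0 := by
    intro k l h
    rw [hdot, ortho T (k:ℕ) (l:ℕ) (hkT k) (hkT l) (fun hc => h (Fin.ext hc))]
    simp
  have hherm : Eᴴ = E := by
    rw [hE]
    ext i j
    simp only [conjTranspose_apply, Matrix.sum_apply, Matrix.smul_apply, vecMulVec_apply,
      smul_eq_mul, star_sum, star_mul', Pi.star_apply, star_star]
    refine Finset.sum_congr rfl fun t _ => ?_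
    rw [show star ((1:ℂ)/2) = (1:ℂ)/2 by norm_num]
    ring
  constructor
  · obtain ⟨k1, hk1⟩ : ∃ k : Fin (T+1), (k:ℕ) = 1 := ⟨⟨1, by omega⟩, rfl⟩
    refine ⟨vv k1, ?_, ?_⟩
    · intro h0
      exact hdot_ne k1 (by rw [h0]; simp)
    · have h := heigv k1
      rw [hk1] at h
      simpa using h
  · intro μ v hv hEv
    have hexist : ∃ k : Fin (T+1), (μ:ℂ) = ((1 - Real.cos (π * (k:ℕ) / (T+1)) : ℝ) : ℂ) := by
      by_contra hnone
      push_neg at hnone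
      have hdv : ∀ k : Fin (T+1), star (vv k) ⬝ᵥ v = 0 := by
        intro k
        have h1 : star (vv k) ⬝ᵥ (E *ᵥ v) = (μ:ℂ) * (star (vv k) ⬝ᵥ v) := by
          rw [hEv, dotProduct_smul, smul_eq_mul]
        have h2 : star (vv k) ⬝ᵥ (E *ᵥ v)
            = ((1 - Real.cos (π * (k:ℕ) / (T+1)) : ℝ) : ℂ) * (star (vv k) ⬝ᵥ v) := by
          rw [dotProduct_mulVec]
          have hsm : star (vv k) ᵥ* E
              = ((1 - Real.cos (π * (k:ℕ) / (T+1)) : ℝ) : ℂ) • star (vv k) := by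
            have hs := congrArg star (heigv k)
            rw [Matrix.star_mulVec, hherm] at hs
            rw [hs, star_smul]
            congr 1
            exact Complex.conj_ofReal _
          rw [hsm, smul_dotProduct, smul_eq_mul]
        rcases mul_eq_zero.mp (show ((μ:ℂ) - ((1 - Real.cos (π * (k:ℕ) / (T+1)) : ℝ) : ℂ))
            * (star (vv k) ⬝ᵥ v) = 0 from by linear_combination h1.symm.trans h2) with h | h
        · exact absurd (by linear_combination h) (hnone k)
        · exact h
      have hlin : LinearIndependent ℂ vv := by
        rw [Fintype.linearIndependent_iff]
        intro g hg l
        have hdg := congrArg (fun u => star (vv l) ⬝ᵥ u) hg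
        simp only [dotProduct_zero] at hdg
        rw [dotProduct_sum'] at hdg
        rw [Finset.sum_congr rfl (fun i _ => by rw [dotProduct_smul (g i) (star (vv l)) (vv i), smul_eq_mul])] at hdg
        rw [Finset.sum_eq_single l (fun i _ hil => by rw [hdot_zero l i (Ne.symm hil), mul_zero])
          (fun h => absurd (Finset.mem_univ l) h)] at hdg
        exact (mul_eq_zero.mp hdg).resolve_right (hdot_ne l)
      have hcard : Fintype.card (Fin (T+1)) = Module.finrank ℂ (Fin (T+1) → ℂ) := by
        simp [Module.finrank_pi]
      have hspan : v ∈ Submodule.span ℂ (Set.range vv) := by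
        have hb2 := Module.Basis.span_eq (basisOfLinearIndependentOfCardEqFinrank hlin hcard)
        rw [coe_basisOfLinearIndependentOfCardEqFinrank] at hb2
        rw [hb2]
        exact Submodule.mem_top
      obtain ⟨c, hc⟩ := (Submodule.mem_span_range_iff_exists_fun ℂ).mp hspan
      apply hv
      have hsv : ∀ kk : Fin (T+1), star v ⬝ᵥ vv kk = 0 := by
        intro kk
        rw [star_dotProduct, hdv kk, star_zero]
      have hvv0 : star v ⬝ᵥ v = 0 := by
        have hstep : star v ⬝ᵥ v = star v ⬝ᵥ (∑ i : Fin (T+1), c i • vv i) := by rw [hc]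
        rw [hstep, dotProduct_sum']
        refine Finset.sum_eq_zero fun i _ => ?_
        rw [dotProduct_smul, hsv i, smul_zero]
      have hsum : ∑ j : Fin (T+1), Complex.normSq (v j) = 0 := by
        have hrw : star v ⬝ᵥ v = ((∑ j : Fin (T+1), Complex.normSq (v j) : ℝ) : ℂ) := by
          rw [dotProduct]
          push_cast
          exact Finset.sum_congr rfl fun j _ => by
            rw [Pi.star_apply, Complex.star_def, mul_comm, Complex.mul_conj]
        rw [hrw] at hvv0
        exact_mod_cast hvv0
      funext j
      have hj := (Finset.sum_eq_zero_iff_of_nonneg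
        (fun j _ => Complex.normSq_nonneg _)).mp hsum j (Finset.mem_univ j)
      exact Complex.normSq_eq_zero.mp hj
    obtain ⟨k, hk⟩ := hexist
    have hkμ : μ = 1 - Real.cos (π * (k:ℕ) / (T+1)) := by exact_mod_cast hk
    rcases Nat.eq_zero_or_pos (k:ℕ) with h0 | h1
    · left
      rw [hkμ, h0]
      simp
    · right
      rw [hkμ]
      have hkT' : ((k:ℕ):ℝ) ≤ (T:ℝ) := by exact_mod_cast hkT k
      have hk1 : (1:ℝ) ≤ ((k:ℕ):ℝ) := by exact_mod_cast h1
      have hcos : Real.cos (π * (k:ℕ) / (T+1)) ≤ Real.cos (π / (T+1)) := by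
        apply Real.cos_le_cos_of_nonneg_of_le_pi
        · positivity
        · rw [div_le_iff₀ hT0]
          nlinarith [Real.pi_pos]
        · rw [div_le_div_iff₀ hT0 hT0]
          nlinarith [mul_nonneg (mul_nonneg Real.pi_pos.le (sub_nonneg.mpr hk1)) hT0.le]
      linarith
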